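/- In the right-angled Artin group A(P₄) = ⟨a, b, c, d | ab=ba, bc=cb, cd=dc⟩, the subgroup generated by aca⁻¹, b, c, dbd⁻¹ is isomorphic to A(P₄) itself, with the isomorphism sending the standard generators a, b, c, d to aca⁻¹, b, c, dbd⁻¹ respectively. -/

import Mathlib

/-- Relations of the right-angled Artin group A(P₄) = ⟨a,b,c,d | ab=ba, bc=cb, cd=dc⟩,
generators indexed by `Fin 4` (0 ↦ a, 1 ↦ b, 2 ↦ c, 3 ↦ d). -/
def AP4Rels : Set (FreeGroup (Fin 4)) :=
  { FreeGroup.of 0 * FreeGroup.of 1 * (FreeGroup.of 1 * FreeGroup.of 0)⁻¹,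
    FreeGroup.of 1 * FreeGroup.of 2 * (FreeGroup.of 2 * FreeGroup.of 1)⁻¹,
    FreeGroup.of 2 * FreeGroup.of 3 * (FreeGroup.of 3 * FreeGroup.of 2)⁻¹ }


open Monoid

namespace AP4X

abbrev Zm := Multiplicative ℤ

/-- Free group on two generators as a free product ℤ * ℤ. -/
abbrev F : Type := Monoid.CoprodI (fun _ : Bool => Zm)

def off : Zm →* F := Monoid.CoprodI.of (M := fun _ : Bool => Zm) (i := false)
def ofc : Zm →* F := Monoid.CoprodI.of (M := fun _ : Bool => Zm) (i := true)

/-- generator "a" of F -/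
def ga : F := off (Multiplicative.ofAdd 1)

/-- The endomorphism a ↦ a c a⁻¹, c ↦ c of the free group F. -/
noncomputable def fEnd : F →* F :=
  Monoid.CoprodI.lift (fun i => match i with
    | false => ((MulAut.conj ga).toMonoidHom.comp ofc)
    | true => ofc)

@[simp] lemma fEnd_ofc (y : Zm) : fEnd (ofc y) = ofc y := by
  simp [fEnd, ofc, Monoid.CoprodI.lift_of]

lemma fEnd_off (y : Zm) : fEnd (off y) = ga * ofc y * ga⁻¹ := by
  simp [fEnd, off, Monoid.CoprodI.lift_of]

end AP4X

namespace AP4X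

open Monoid.CoprodI

abbrev Mfam : Bool → Type := fun _ => Zm

/-- image of a letter under `fEnd`, as a list of letters -/
def emit : (Σ i : Bool, Mfam i) → List (Σ i : Bool, Mfam i)
  | ⟨false, g⟩ => [⟨false, .ofAdd 1⟩, ⟨true, g⟩, ⟨false, .ofAdd (-1)⟩]
  | ⟨true, g⟩ => [⟨true, g⟩]

lemma emit_ne_one (l : Σ i : Bool, Mfam i) (hl : l.2 ≠ 1) :
    ∀ l' ∈ emit l, l'.2 ≠ 1 := by
  obtain ⟨i, g⟩ := l
  cases i <;> simp_all [emit]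

lemma emit_head (l : Σ i : Bool, Mfam i) :
    (emit l).head?.map Sigma.fst = some l.1 := by
  obtain ⟨i, g⟩ := l; cases i <;> rfl

lemma emit_getLast (l : Σ i : Bool, Mfam i) :
    ((emit l).getLast?).map Sigma.fst = some l.1 := by
  obtain ⟨i, g⟩ := l; cases i <;> rfl

lemma flat_head (L : List (Σ i : Bool, Mfam i)) :
    (L.flatMap emit).head?.map Sigma.fst = L.head?.map Sigma.fst := by
  cases L with
  | nil => rfl
  | cons x xs =>
    obtain ⟨i, g⟩ := x; cases i <;> rfl

lemma chain_flat (L : List (Σ i : Bool, Mfam i))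
    (h : L.Chain' fun l l' => l.1 ≠ l'.1) :
    (L.flatMap emit).Chain' fun l l' => l.1 ≠ l'.1 := by
  unfold List.Chain' at h ⊢
  induction L with
  | nil => simp
  | cons x xs ih =>
    rw [List.isChain_cons] at h
    obtain ⟨hxy, hxs⟩ := h
    rw [List.flatMap_cons, List.isChain_append]
    refine ⟨?_, ih hxs, ?_⟩
    · obtain ⟨i, g⟩ := x; cases i <;> simp [emit]
    · intro p hp q hq
      have h1 : p.1 = x.1 := by
        have := emit_getLast x
        rw [show (emit x).getLast? = some p from hp] at this
        simpa using this
      have h2 : x.1 ≠ q.1 := by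
        have := flat_head xs
        rw [show (xs.flatMap emit).head? = some q from hq] at this
        obtain ⟨y, hy1, hy2⟩ : ∃ y, xs.head? = some y ∧ y.1 = q.1 := by
          cases hxs' : xs.head? with
          | none => rw [hxs'] at this; simp at this
          | some y => rw [hxs'] at this; simp at this; exact ⟨y, rfl, this.symm⟩
        rw [← hy2]
        exact hxy y hy1
      rw [h1]; exact h2

end AP4X

namespace AP4X

open Monoid.CoprodI

lemma emit_prod (l : (i : Bool) × Mfam i) :
    ((emit l).map fun l' => (Monoid.CoprodI.of (M := Mfam) (i := l'.1) l'.2)).prod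
      = fEnd (Monoid.CoprodI.of (M := Mfam) (i := l.1) l.2) := by
  obtain ⟨i, g⟩ := l
  cases i
  · have h1 : fEnd (Monoid.CoprodI.of (M := Mfam) (i := false) g) = ga * ofc g * ga⁻¹ :=
      fEnd_off g
    have hinv : (Monoid.CoprodI.of (M := Mfam) (i := false) (.ofAdd (-1))) = ga⁻¹ := by
      rw [show ((.ofAdd (-1) : Zm)) = (Multiplicative.ofAdd 1)⁻¹ from rfl, map_inv]; rfl
    simp only [emit, List.map_cons, List.map_nil, List.prod_cons, List.prod_nil, h1, hinv,
      mul_one]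
    show ga * ((ofc g) * ga⁻¹) = ga * ofc g * ga⁻¹
    rw [mul_assoc]
  · simp only [emit, List.map_cons, List.map_nil, List.prod_cons, List.prod_nil, mul_one]
    show ofc g = fEnd (ofc g)
    rw [fEnd_ofc]

lemma flat_prod (L : List ((i : Bool) × Mfam i)) :
    ((L.flatMap emit).map fun l' => (Monoid.CoprodI.of (M := Mfam) (i := l'.1) l'.2)).prod
      = fEnd ((L.map fun l => (Monoid.CoprodI.of (M := Mfam) (i := l.1) l.2)).prod) := by
  induction L with
  | nil => simp
  | cons x xs ih =>
    rw [List.flatMap_cons, List.map_append, List.prod_append, List.map_cons,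
      List.prod_cons, map_mul, ih, emit_prod]

lemma word_prod_eq (v : Word Mfam) :
    v.prod = (v.toList.map fun l => (Monoid.CoprodI.of (M := Mfam) (i := l.1) l.2)).prod :=
  rfl

/-- The key lemma: if `fEnd w` lies in the subgroup generated by `c`, so does `w`. -/
lemma key {w : F} (h : fEnd w ∈ ofc.range) : w ∈ ofc.range := by
  classical
  set v : Word Mfam := Word.equiv w with hveq
  have hv : v.prod = w := Word.equiv.symm_apply_apply w
  let Tv : Word Mfam :=
    ⟨v.toList.flatMap emit,
     fun l' hl' => by
       rw [List.mem_flatMap] at hl'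
       obtain ⟨l, hl, hl'⟩ := hl'
       exact emit_ne_one l (v.ne_one l hl) l' hl',
     chain_flat v.toList v.chain_ne⟩
  have hTprod : Tv.prod = fEnd w := by
    rw [← hv, word_prod_eq, word_prod_eq]
    exact flat_prod v.toList
  obtain ⟨y, hy⟩ := h
  by_cases hy1 : y = 1
  · -- then fEnd w = 1, so Tv is the empty word
    have hT : Tv = Word.empty := by
      apply Word.equiv.symm.injective
      show Tv.prod = Word.prod Word.empty
      rw [hTprod, ← hy, hy1, map_one, Word.prod_empty]
    have : v.toList.flatMap emit = [] := congrArg Word.toList hT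
    rw [List.flatMap_eq_nil_iff] at this
    have hvnil : v.toList = [] := by
      cases hL : v.toList with
      | nil => rfl
      | cons x xs =>
        exfalso
        have := this x (hL ▸ List.mem_cons_self (a := x) (l := xs))
        obtain ⟨i, g⟩ := x; cases i <;> simp [emit] at this
    have : w = 1 := by
      rw [← hv, word_prod_eq, hvnil]; rfl
    rw [this]; exact one_mem _
  · -- Tv is the single-letter word ⟨true, y⟩
    let w0 : Word Mfam := ⟨[⟨true, y⟩], by simpa using hy1, List.isChain_singleton _⟩
    have hT : Tv = w0 := by
      apply Word.equiv.symm.injective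
      show Tv.prod = w0.prod
      rw [hTprod, ← hy, word_prod_eq]
      show _ = (ofc y * 1)
      rw [mul_one]
    have htrue : ∀ l ∈ v.toList, l.1 = true := by
      intro l hl
      by_contra hfalse
      have hlf : l.1 = false := by cases hl1 : l.1 <;> simp_all
      have hmem : (⟨false, (.ofAdd 1 : Zm)⟩ : (i : Bool) × Mfam i) ∈ v.toList.flatMap emit := by
        rw [List.mem_flatMap]
        refine ⟨l, hl, ?_⟩
        obtain ⟨i, g⟩ := l
        cases i
        · simp [emit]
        · simp at hlf
      have : (⟨false, (.ofAdd 1 : Zm)⟩ : (i : Bool) × Mfam i) ∈ w0.toList := by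
        rw [← congrArg Word.toList hT]; exact hmem
      simp [w0] at this
    cases hL : v.toList with
    | nil =>
      have : w = 1 := by
        rw [← hv, word_prod_eq, hL]; rfl
      rw [this]; exact one_mem _
    | cons x xs =>
      cases hxs : xs with
      | nil =>
        have hx : x.1 = true := htrue x (hL ▸ List.mem_cons_self (a := x) (l := xs))
        obtain ⟨i, g⟩ := x
        subst hxs
        have hi : i = true := hx
        subst hi
        have : w = ofc g := by
          rw [← hv, word_prod_eq, hL]
          show Monoid.CoprodI.of (M := Mfam) (i := true) g * 1 = ofc g
          rw [mul_one]; rfl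
        rw [this]; exact ⟨g, rfl⟩
      | cons x' xs' =>
        exfalso
        have hc := v.chain_ne
        rw [hL, hxs, List.isChain_cons_cons] at hc
        have h1 : x.1 = true := htrue x (by rw [hL]; exact List.mem_cons_self)
        have h2 : x'.1 = true := htrue x' (by rw [hL, hxs]; simp)
        exact hc.1 (h1.trans h2.symm)

lemma fEnd_inj : Function.Injective fEnd := by
  rw [injective_iff_map_eq_one]
  intro w hw
  obtain ⟨y, rfl⟩ := key (w := w) (by rw [hw]; exact one_mem _)
  rw [fEnd_ofc] at hw
  have : y = 1 := Monoid.CoprodI.of_injective (M := Mfam) true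
    (by rw [show Monoid.CoprodI.of (M := Mfam) (i := true) y = ofc y from rfl, hw, map_one])
  rw [this, map_one]

end AP4X

namespace AP4X

open Monoid Monoid.PushoutI

abbrev Agrp := F × Zm
abbrev Hgrp := Zm × Zm
abbrev Gfam : Bool → Type := fun _ => Agrp

/-- The amalgam maps: `false`-side has free part ⟨a,c⟩ and central ℤ part b, with
amalgamated subgroup generated by (b, c);  `true`-side has free part ⟨d,b⟩ and central
part c.  In both cases the first coordinate of `Hgrp` maps to the central part on one side
and to the `true`-generator of `F` on the other. -/
def φmap : ∀ i : Bool, Hgrp →* Gfam i := fun i =>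
  match i with
  | false => (ofc.comp (MonoidHom.snd Zm Zm)).prod (MonoidHom.fst Zm Zm)
  | true  => (ofc.comp (MonoidHom.fst Zm Zm)).prod (MonoidHom.snd Zm Zm)

lemma φmap_false (x y : Zm) : φmap false (x, y) = (ofc y, x) := rfl
lemma φmap_true (x y : Zm) : φmap true (x, y) = (ofc x, y) := rfl

lemma ofc_inj : Function.Injective ofc := Monoid.CoprodI.of_injective (M := Mfam) true

lemma hφinj : ∀ i, Function.Injective (φmap i) := by
  intro i
  cases i <;>
  · rintro ⟨x, y⟩ ⟨x', y'⟩ h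
    rw [Prod.ext_iff] at h
    obtain ⟨h1, h2⟩ := h
    simp only [φmap, MonoidHom.prod_apply, MonoidHom.coe_comp, Function.comp_apply,
      MonoidHom.coe_snd, MonoidHom.coe_fst] at h1 h2
    exact Prod.ext (by first | exact h2 | exact ofc_inj h1) (by first | exact ofc_inj h1 | exact h2)

lemma mem_range_φmap (i : Bool) (g : Agrp) :
    g ∈ (φmap i).range ↔ g.1 ∈ ofc.range := by
  cases i <;>
  · constructor
    · rintro ⟨⟨x, y⟩, rfl⟩
      first
        | exact ⟨y, rfl⟩
        | exact ⟨x, rfl⟩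
    · rintro ⟨y, hy⟩
      first
        | exact ⟨(g.2, y), by rw [φmap_false, hy]⟩
        | exact ⟨(y, g.2), by rw [φmap_true, hy]⟩

/-- The endomorphism on each vertex group. -/
noncomputable def Eend : Agrp →* Agrp := (fEnd).prodMap (MonoidHom.id Zm)

lemma Eend_apply (w : F) (m : Zm) : Eend (w, m) = (fEnd w, m) := rfl

lemma Eend_inj : Function.Injective Eend := by
  rintro ⟨w, m⟩ ⟨w', m'⟩ h
  rw [Eend_apply, Eend_apply, Prod.ext_iff] at h
  exact Prod.ext (fEnd_inj h.1) h.2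

lemma Eend_range {i : Bool} {g : Agrp} (h : Eend g ∈ (φmap i).range) :
    g ∈ (φmap i).range := by
  rw [mem_range_φmap] at h ⊢
  exact key h

lemma Eend_fix (i : Bool) (h : Hgrp) : Eend (φmap i h) = φmap i h := by
  obtain ⟨x, y⟩ := h
  cases i
  · rw [φmap_false, Eend_apply, fEnd_ofc]
  · rw [φmap_true, Eend_apply, fEnd_ofc]

/-- The ambient amalgamated product, isomorphic to A(P₄). -/
abbrev P : Type := PushoutI φmap

/-- The endomorphism of the amalgam. -/
noncomputable def φhat : P →* P :=
  PushoutI.lift (fun i => (PushoutI.of (φ := φmap) i).comp Eend) (PushoutI.base φmap)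
    (by
      intro i
      ext h
      show PushoutI.of i (Eend (φmap i h)) = PushoutI.base φmap h
      rw [Eend_fix, of_apply_eq_base])

lemma φhat_of (i : Bool) (g : Agrp) :
    φhat (PushoutI.of (φ := φmap) i g) = PushoutI.of (φ := φmap) i (Eend g) := by
  rw [φhat, PushoutI.lift_of]; rfl

lemma φhat_base (h : Hgrp) :
    φhat (PushoutI.base φmap h) = PushoutI.base φmap h := by
  rw [φhat, PushoutI.lift_base]

lemma notin_range {i : Bool} {g : Agrp} (d : NormalWord.Transversal φmap)
    (hmem : g ∈ d.set i) (h1 : g ≠ 1) : g ∉ (φmap i).range := by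
  intro hr
  apply h1
  have := (d.compl i).1
    (a₁ := (⟨g, hr⟩, ⟨1, d.one_mem i⟩))
    (a₂ := (⟨1, (φmap i).range.one_mem⟩, ⟨g, hmem⟩))
    (by simp)
  have := congrArg (fun p => (p.1 : Agrp)) this
  simpa using this

lemma ofCoprodI_word_prod (v : Monoid.CoprodI.Word Gfam) :
    PushoutI.ofCoprodI (φ := φmap) v.prod
      = (v.toList.map fun l => PushoutI.of (φ := φmap) l.1 l.2).prod := by
  show PushoutI.ofCoprodI (φ := φmap)
      (List.prod (v.toList.map fun l => Monoid.CoprodI.of l.2)) = _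
  rw [map_list_prod, List.map_map]
  congr 1

lemma φhat_inj : Function.Injective φhat := by
  classical
  rw [injective_iff_map_eq_one]
  intro x hx
  obtain ⟨dT⟩ := NormalWord.transversal_nonempty φmap hφinj
  set n : NormalWord dT := NormalWord.equiv (d := dT) x with hn
  have hxprod : n.prod = x := (NormalWord.equiv (d := dT)).symm_apply_apply x
  -- the transformed word
  let w' : Monoid.CoprodI.Word Gfam :=
    ⟨n.toList.map fun l => ⟨l.1, Eend l.2⟩,
     by
       intro l' hl'
       rw [List.mem_map] at hl'
       obtain ⟨l, hl, rfl⟩ := hl'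
       have h2 : l.2 ≠ 1 := n.ne_one l hl
       intro h
       have h' : Eend l.snd = 1 := h
       exact h2 (Eend_inj (by rw [h', map_one])),
     by
       rw [List.isChain_map]
       exact n.chain_ne⟩
  have hred : Reduced φmap w' := by
    intro g hg
    rw [List.mem_map] at hg
    obtain ⟨l, hl, rfl⟩ := hg
    intro hr
    obtain ⟨i, g⟩ := l
    have hset : g ∈ dT.set i := n.normalized i g hl
    have hne : g ≠ 1 := n.ne_one ⟨i, g⟩ hl
    exact notin_range dT hset hne (Eend_range hr)
  have hφx : φhat x = PushoutI.base φmap n.head * PushoutI.ofCoprodI (φ := φmap) w'.prod := by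
    rw [← hxprod]
    show φhat (PushoutI.base φmap n.head * PushoutI.ofCoprodI (φ := φmap) n.toWord.prod) = _
    rw [map_mul, φhat_base, ofCoprodI_word_prod, ofCoprodI_word_prod, map_list_prod,
      List.map_map, List.map_map]
    congr 2
  have hbase : PushoutI.ofCoprodI (φ := φmap) w'.prod ∈ (PushoutI.base φmap).range := by
    refine ⟨n.head⁻¹, ?_⟩
    rw [hφx] at hx
    rw [map_inv]
    exact (eq_inv_of_mul_eq_one_right (by rw [← hx])).symm
  have hempty : w' = Monoid.CoprodI.Word.empty := hred.eq_empty_of_mem_range hφinj hbase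
  have hnil : n.toList = [] := by
    have := congrArg Monoid.CoprodI.Word.toList hempty
    simpa [w', Monoid.CoprodI.Word.empty] using this
  have : x = PushoutI.base φmap n.head := by
    rw [← hxprod]
    show PushoutI.base φmap n.head * PushoutI.ofCoprodI (φ := φmap) n.toWord.prod = _
    rw [ofCoprodI_word_prod, hnil]
    simp
  rw [this] at hx ⊢
  rw [φhat_base] at hx
  have : n.head = 1 := base_injective hφinj (by rw [hx, map_one])
  rw [this, map_one]

end AP4X


namespace AP4X

open Monoid Monoid.PushoutI

abbrev PG := PresentedGroup AP4Rels

def aP : PG := PresentedGroup.of 0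
def bP : PG := PresentedGroup.of 1
def cP : PG := PresentedGroup.of 2
def dP : PG := PresentedGroup.of 3

lemma rel_mk {r : FreeGroup (Fin 4)} (hr : r ∈ AP4Rels) : PresentedGroup.mk AP4Rels r = 1 :=
  (QuotientGroup.eq_one_iff r).mpr (Subgroup.subset_normalClosure hr)

lemma hab : aP * bP = bP * aP := by
  have h := rel_mk (Set.mem_insert _ _)
  rw [map_mul, map_mul, map_inv, map_mul, mul_inv_eq_one] at h
  exact h

lemma hbc : bP * cP = cP * bP := by
  have h := rel_mk (Set.mem_insert_iff.mpr (Or.inr (Set.mem_insert _ _)))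
  rw [map_mul, map_mul, map_inv, map_mul, mul_inv_eq_one] at h
  exact h

lemma hcd : cP * dP = dP * cP := by
  have h := rel_mk (Set.mem_insert_iff.mpr (Or.inr (Set.mem_insert_iff.mpr
    (Or.inr rfl))))
  rw [map_mul, map_mul, map_inv, map_mul, mul_inv_eq_one] at h
  exact h

lemma commAB : Commute aP bP := hab
lemma commBC : Commute bP cP := hbc
lemma commCD : Commute cP dP := hcd

-- generators of the pushout P
def gaP : P := PushoutI.of (φ := φmap) false (ga, 1)
def gbP : P := PushoutI.base φmap (.ofAdd 1, 1)
def gcP : P := PushoutI.base φmap (1, .ofAdd 1)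
def gdP : P := PushoutI.of (φ := φmap) true (ga, 1)

lemma base_eq_false (x y : Zm) :
    PushoutI.base φmap (x, y) = PushoutI.of (φ := φmap) false (ofc y, x) :=
  (of_apply_eq_base φmap false (x, y)).symm

lemma base_eq_true (x y : Zm) :
    PushoutI.base φmap (x, y) = PushoutI.of (φ := φmap) true (ofc x, y) :=
  (of_apply_eq_base φmap true (x, y)).symm

lemma prod_comm' (w : F) (x : Zm) :
    Commute ((w, (1 : Zm)) : Agrp) (((1 : F), x) : Agrp) := by
  show _ = _
  simp [Prod.mk_mul_mk]

lemma comm_gab : Commute gaP gbP := by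
  rw [gbP, show ((.ofAdd 1 : Zm), (1:Zm)) = ((Multiplicative.ofAdd 1 : Zm), (1:Zm)) from rfl,
    base_eq_false]
  rw [show ofc (1 : Zm) = 1 from map_one ofc]
  exact (prod_comm' ga (.ofAdd 1)).map (PushoutI.of (φ := φmap) false)

lemma comm_gbc : Commute gbP gcP := by
  show _ = _
  rw [gbP, gcP, ← map_mul, ← map_mul]
  congr 1

lemma comm_gcd : Commute gdP gcP := by
  rw [gcP, base_eq_true]
  rw [show ofc (1 : Zm) = 1 from map_one ofc]
  exact (prod_comm' ga (.ofAdd 1)).map (PushoutI.of (φ := φmap) true)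

def πgen : Fin 4 → P := ![gaP, gbP, gcP, gdP]

lemma πrels : ∀ r ∈ AP4Rels, FreeGroup.lift πgen r = 1 := by
  intro r hr
  simp only [AP4Rels, Set.mem_insert_iff, Set.mem_singleton_iff] at hr
  rcases hr with rfl | rfl | rfl <;>
    rw [map_mul, map_mul, map_inv, map_mul, mul_inv_eq_one] <;>
    simp only [FreeGroup.lift_apply_of] <;>
    show _ = _
  · exact comm_gab
  · exact comm_gbc
  · exact comm_gcd.symm

noncomputable def π : PG →* P := PresentedGroup.toGroup πrels

lemma π0 : π aP = gaP := PresentedGroup.toGroup.of πrels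
lemma π1 : π bP = gbP := PresentedGroup.toGroup.of πrels
lemma π2 : π cP = gcP := PresentedGroup.toGroup.of πrels
lemma π3 : π dP = gdP := PresentedGroup.toGroup.of πrels

end AP4X

namespace AP4X

open Monoid Monoid.PushoutI

def FtoAfam : ∀ i : Bool, Mfam i →* PG := fun i => match i with
  | false => zpowersHom PG aP
  | true => zpowersHom PG cP

def FtoBfam : ∀ i : Bool, Mfam i →* PG := fun i => match i with
  | false => zpowersHom PG dP
  | true => zpowersHom PG bP

noncomputable def FtoA : F →* PG := Monoid.CoprodI.lift FtoAfam
noncomputable def FtoB : F →* PG := Monoid.CoprodI.lift FtoBfam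

lemma FtoA_of {i : Bool} (m : Mfam i) :
    FtoA (Monoid.CoprodI.of (M := Mfam) (i := i) m) = FtoAfam i m :=
  Monoid.CoprodI.lift_of FtoAfam m

lemma FtoB_of {i : Bool} (m : Mfam i) :
    FtoB (Monoid.CoprodI.of (M := Mfam) (i := i) m) = FtoBfam i m :=
  Monoid.CoprodI.lift_of FtoBfam m

lemma commB_FtoA (w : F) : Commute bP (FtoA w) := by
  induction w using Monoid.CoprodI.induction_on with
  | one => exact Commute.one_right bP
  | of i m =>
    rw [FtoA_of]
    cases i
    · rw [show FtoAfam false m = zpowersHom PG aP m from rfl, zpowersHom_apply]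
      exact (commAB.symm).zpow_right _
    · rw [show FtoAfam true m = zpowersHom PG cP m from rfl, zpowersHom_apply]
      exact commBC.zpow_right _
  | mul x y hx hy => rw [map_mul]; exact hx.mul_right hy

lemma commC_FtoB (w : F) : Commute cP (FtoB w) := by
  induction w using Monoid.CoprodI.induction_on with
  | one => exact Commute.one_right cP
  | of i m =>
    rw [FtoB_of]
    cases i
    · rw [show FtoBfam false m = zpowersHom PG dP m from rfl, zpowersHom_apply]
      exact commCD.zpow_right _
    · rw [show FtoBfam true m = zpowersHom PG bP m from rfl, zpowersHom_apply]
      exact (commBC.symm).zpow_right _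
  | mul x y hx hy => rw [map_mul]; exact hx.mul_right hy

noncomputable def fA : Agrp →* PG :=
  MonoidHom.noncommCoprod FtoA (zpowersHom PG bP)
    (fun w m => by rw [zpowersHom_apply]; exact ((commB_FtoA w).symm).zpow_right _)

noncomputable def fB : Agrp →* PG :=
  MonoidHom.noncommCoprod FtoB (zpowersHom PG cP)
    (fun w m => by rw [zpowersHom_apply]; exact ((commC_FtoB w).symm).zpow_right _)

lemma fA_apply (w : F) (m : Zm) : fA (w, m) = FtoA w * zpowersHom PG bP m := rfl
lemma fB_apply (w : F) (m : Zm) : fB (w, m) = FtoB w * zpowersHom PG cP m := rfl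

lemma FtoA_ofc (y : Zm) : FtoA (ofc y) = zpowersHom PG cP y := FtoA_of y
lemma FtoA_ga : FtoA ga = aP := by
  rw [ga, show off (Multiplicative.ofAdd 1)
    = Monoid.CoprodI.of (M := Mfam) (i := false) (Multiplicative.ofAdd 1) from rfl,
    FtoA_of]
  show zpowersHom PG aP _ = aP
  rw [zpowersHom_apply]
  simp
lemma FtoB_ofc (y : Zm) : FtoB (ofc y) = zpowersHom PG bP y := FtoB_of y
lemma FtoB_ga : FtoB ga = dP := by
  rw [ga, show off (Multiplicative.ofAdd 1)
    = Monoid.CoprodI.of (M := Mfam) (i := false) (Multiplicative.ofAdd 1) from rfl,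
    FtoB_of]
  show zpowersHom PG dP _ = dP
  rw [zpowersHom_apply]
  simp

noncomputable def kH : Hgrp →* PG :=
  MonoidHom.noncommCoprod (zpowersHom PG bP) (zpowersHom PG cP)
    (fun x y => by rw [zpowersHom_apply, zpowersHom_apply]; exact commBC.zpow_zpow _ _)

lemma kH_apply (x y : Zm) : kH (x, y) = zpowersHom PG bP x * zpowersHom PG cP y := rfl

noncomputable def σf : ∀ i : Bool, Gfam i →* PG := fun i =>
  match i with | false => fA | true => fB

lemma σcompat : ∀ i : Bool, (σf i).comp (φmap i) = kH := by
  intro i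
  cases i
  · refine MonoidHom.ext fun h => ?_
    obtain ⟨x, y⟩ := h
    show fA (φmap false (x, y)) = kH (x, y)
    rw [φmap_false, fA_apply, FtoA_ofc, kH_apply, zpowersHom_apply, zpowersHom_apply]
    exact ((commBC.zpow_zpow _ _).eq).symm
  · refine MonoidHom.ext fun h => ?_
    obtain ⟨x, y⟩ := h
    show fB (φmap true (x, y)) = kH (x, y)
    rw [φmap_true, fB_apply, FtoB_ofc, kH_apply]

noncomputable def σ : P →* PG := PushoutI.lift σf kH σcompat

lemma σ_of_false (g : Agrp) : σ (PushoutI.of (φ := φmap) false g) = fA g :=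
  PushoutI.lift_of σf kH σcompat g
lemma σ_of_true (g : Agrp) : σ (PushoutI.of (φ := φmap) true g) = fB g :=
  PushoutI.lift_of σf kH σcompat g
lemma σ_base (h : Hgrp) : σ (PushoutI.base φmap h) = kH h :=
  PushoutI.lift_base σf kH σcompat h

lemma σπ : ∀ x : PG, σ (π x) = x := by
  have h : σ.comp π = MonoidHom.id PG := by
    apply PresentedGroup.ext
    intro i
    fin_cases i
    · show σ (π aP) = aP
      rw [π0, gaP, σ_of_false, fA_apply, FtoA_ga]
      simp
    · show σ (π bP) = bP
      rw [π1, gbP]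
      rw [σ_base, kH_apply]
      simp
    · show σ (π cP) = cP
      rw [π2, gcP]
      rw [σ_base, kH_apply]
      simp
    · show σ (π dP) = dP
      rw [π3, gdP, σ_of_true, fB_apply, FtoB_ga]
      simp
  intro x
  exact DFunLike.congr_fun h x

lemma π_inj : Function.Injective π := by
  intro x y h
  have := congrArg σ h
  rwa [σπ, σπ] at this

end AP4X

namespace AP4X

open Monoid Monoid.PushoutI

def φgen : Fin 4 → PG := ![aP * cP * aP⁻¹, bP, cP, dP * bP * dP⁻¹]

lemma φrels : ∀ r ∈ AP4Rels, FreeGroup.lift φgen r = 1 := by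
  intro r hr
  simp only [AP4Rels, Set.mem_insert_iff, Set.mem_singleton_iff] at hr
  rcases hr with rfl | rfl | rfl <;>
    rw [map_mul, map_mul, map_inv, map_mul, mul_inv_eq_one] <;>
    simp only [FreeGroup.lift_apply_of] <;>
    show _ = _
  · exact Commute.mul_left (Commute.mul_left commAB commBC.symm) commAB.inv_left
  · exact commBC
  · exact Commute.mul_right (Commute.mul_right commCD commBC.symm) commCD.inv_right

noncomputable def φPG : PG →* PG := PresentedGroup.toGroup φrels

lemma φ0 : φPG aP = aP * cP * aP⁻¹ := PresentedGroup.toGroup.of φrels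
lemma φ1 : φPG bP = bP := PresentedGroup.toGroup.of φrels
lemma φ2 : φPG cP = cP := PresentedGroup.toGroup.of φrels
lemma φ3 : φPG dP = dP * bP * dP⁻¹ := PresentedGroup.toGroup.of φrels

lemma sq : π.comp φPG = φhat.comp π := by
  refine PresentedGroup.ext (G := P) (φ := π.comp φPG) (ψ := φhat.comp π) fun i => ?_
  fin_cases i
  · show π (φPG aP) = φhat (π aP)
    rw [φ0, π0, map_mul, map_mul, map_inv, π0, π2, gaP, gcP, base_eq_false, φhat_of,
      Eend_apply, ← map_inv, ← map_mul, ← map_mul]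
    congr 1
  · show π (φPG bP) = φhat (π bP)
    rw [φ1, π1, gbP, φhat_base]
  · show π (φPG cP) = φhat (π cP)
    rw [φ2, π2, gcP, φhat_base]
  · show π (φPG dP) = φhat (π dP)
    rw [φ3, π3, map_mul, map_mul, map_inv, π3, π1, gdP, gbP, base_eq_true, φhat_of,
      Eend_apply, ← map_inv, ← map_mul, ← map_mul]
    congr 1

lemma φPG_inj : Function.Injective φPG := by
  have hs : ∀ z, π (φPG z) = φhat (π z) := fun z => DFunLike.congr_fun sq z
  intro x y h
  exact π_inj (φhat_inj (by rw [← hs, ← hs, h]))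

end AP4X

/-- The subgroup of A(P₄) generated by a c a⁻¹, b, c, d b d⁻¹ is isomorphic to A(P₄):
there is an (injective) homomorphism A(P₄) → A(P₄) sending the standard generators
a, b, c, d to a c a⁻¹, b, c, d b d⁻¹ respectively. -/
theorem AP4_self_embedding :
    let a : PresentedGroup AP4Rels := PresentedGroup.of 0
    let b : PresentedGroup AP4Rels := PresentedGroup.of 1
    let c : PresentedGroup AP4Rels := PresentedGroup.of 2
    let d : PresentedGroup AP4Rels := PresentedGroup.of 3
    ∃ φ : PresentedGroup AP4Rels →* PresentedGroup AP4Rels,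
      φ a = a * c * a⁻¹ ∧ φ b = b ∧ φ c = c ∧ φ d = d * b * d⁻¹ ∧
      Function.Injective φ := by
  intro a b c d
  exact ⟨AP4X.φPG, AP4X.φ0, AP4X.φ1, AP4X.φ2, AP4X.φ3, AP4X.φPG_inj⟩
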